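/- In the formal power series ring (F[x])[[t]], the identity (q t² + x t + q^{-1}) · (q^{-1} t² + x t + q) · (∑_{n≥0} (−1)^n [n]_q U_{n−1}(x) t^n) = t³ − t holds. (This is the identity ∑_{n≥0} (−1)^n t^n [n]_q U_{n−1}(x) = (t − t^{-1}) / ((q t + q^{-1} t^{-1} + x)(q^{-1} t + q t^{-1} + x)) after multiplying by t² times the denominators.) -/

import Mathlib

noncomputable section

open Polynomial

variable (F : Type) [Field F] (q : F)

/-- Monic Chebyshev polynomials of the second kind, indexed by ℕ:
`U_0 = 1`, `U_1 = x`, `U_{n+2} = x·U_{n+1} - U_n`. -/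
def Uc : ℕ → Polynomial F
  | 0 => 1
  | 1 => X
  | n + 2 => X * Uc (n + 1) - Uc n

/-- Monic Chebyshev polynomials of the second kind, indexed by ℤ (zero for negative index). -/
def U (n : ℤ) : Polynomial F := if 0 ≤ n then Uc F n.toNat else 0

/-- The q-integer `[n]_q = (qⁿ - q⁻ⁿ)/(q - q⁻¹)`. -/
def qint (n : ℤ) : F := (q ^ n - q ^ (-n)) / (q - q⁻¹)

/-- Auxiliary generating function `∑ (-c)ⁿ Uₙ tⁿ`. -/
def Mgf (c : F) : PowerSeries (Polynomial F) :=
  PowerSeries.mk fun n => Polynomial.C ((-c) ^ n) * Uc F n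

lemma Uc_rec (n : ℕ) : Uc F (n + 2) = Polynomial.X * Uc F (n + 1) - Uc F n := rfl

lemma P_mul_M (c : F) :
    (1 + PowerSeries.C (R := Polynomial F) (Polynomial.C c * Polynomial.X) * PowerSeries.X +
        PowerSeries.C (R := Polynomial F) (Polynomial.C (c ^ 2)) * PowerSeries.X ^ 2) * Mgf F c
      = 1 := by
  have expand : (1 + PowerSeries.C (R := Polynomial F) (Polynomial.C c * Polynomial.X) * PowerSeries.X +
        PowerSeries.C (R := Polynomial F) (Polynomial.C (c ^ 2)) * PowerSeries.X ^ 2) * Mgf F c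
      = Mgf F c
        + PowerSeries.C (R := Polynomial F) (Polynomial.C c * Polynomial.X) *
            (PowerSeries.X * Mgf F c)
        + PowerSeries.C (R := Polynomial F) (Polynomial.C (c ^ 2)) *
            (PowerSeries.X * (PowerSeries.X * Mgf F c)) := by ring
  refine PowerSeries.ext fun n => ?_
  rw [expand, map_add, map_add]
  have hM : ∀ k, PowerSeries.coeff (R := Polynomial F) k (Mgf F c)
      = Polynomial.C ((-c) ^ k) * Uc F k := fun k => PowerSeries.coeff_mk _ _
  have hXM : ∀ k, PowerSeries.coeff (R := Polynomial F) (k + 1) (PowerSeries.X * Mgf F c)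
      = Polynomial.C ((-c) ^ k) * Uc F k := fun k => by
    rw [PowerSeries.coeff_succ_X_mul, hM]
  match n with
  | 0 =>
    rw [PowerSeries.coeff_C_mul, PowerSeries.coeff_C_mul, hM,
      PowerSeries.coeff_zero_X_mul, PowerSeries.coeff_zero_X_mul]
    simp [Uc]
  | 1 =>
    rw [PowerSeries.coeff_C_mul, PowerSeries.coeff_C_mul, hM, hXM,
      PowerSeries.coeff_succ_X_mul, PowerSeries.coeff_zero_X_mul]
    simp only [Uc, pow_one, pow_zero, map_neg, Polynomial.C_1, PowerSeries.coeff_one]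
    norm_num
  | (n + 2) =>
    rw [PowerSeries.coeff_C_mul, PowerSeries.coeff_C_mul, hM,
      show n + 2 = (n + 1) + 1 from rfl, hXM, PowerSeries.coeff_succ_X_mul, hXM, Uc_rec]
    simp only [map_pow, map_neg, PowerSeries.coeff_one]
    norm_num
    ring

lemma U_succ_sub_one (m : ℕ) : U F (((m : ℕ) + 1 : ℕ) - 1 : ℤ) = Uc F m := by
  have h : (((m : ℕ) + 1 : ℕ) : ℤ) - 1 = (m : ℤ) := by push_cast; ring
  rw [h, U]
  simp

lemma S_eq :
    PowerSeries.mk (fun n : ℕ => ((-1 : F) ^ n * qint F q (n : ℤ)) • U F ((n : ℤ) - 1)) =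
      PowerSeries.C (R := Polynomial F) (Polynomial.C (-(q * (q - q⁻¹)⁻¹))) *
          (PowerSeries.X * Mgf F q) -
        PowerSeries.C (R := Polynomial F) (Polynomial.C (-(q⁻¹ * (q - q⁻¹)⁻¹))) *
          (PowerSeries.X * Mgf F q⁻¹) := by
  refine PowerSeries.ext fun n => ?_
  rw [map_sub, PowerSeries.coeff_C_mul, PowerSeries.coeff_C_mul, PowerSeries.coeff_mk]
  match n with
  | 0 =>
    rw [PowerSeries.coeff_zero_X_mul, PowerSeries.coeff_zero_X_mul]
    have h0 : U F (((0 : ℕ) : ℤ) - 1) = 0 := by rw [U]; norm_num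
    simp [h0, qint]
  | (m + 1) =>
    rw [PowerSeries.coeff_succ_X_mul, PowerSeries.coeff_succ_X_mul, Mgf, Mgf,
      PowerSeries.coeff_mk, PowerSeries.coeff_mk, U_succ_sub_one, Polynomial.smul_eq_C_mul,
      ← mul_assoc, ← mul_assoc, ← Polynomial.C_mul, ← Polynomial.C_mul, ← sub_mul,
      ← Polynomial.C_sub]
    congr 2
    have key : (-1 : F) ^ (m + 1) * (q ^ (m + 1) - (q⁻¹) ^ (m + 1))
        = -q * (-q) ^ m + q⁻¹ * (-q⁻¹) ^ m := by
      rw [neg_pow q, neg_pow q⁻¹]; ring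
    rw [qint, zpow_neg, zpow_natCast, ← inv_pow]
    linear_combination (q - q⁻¹)⁻¹ * key

theorem chebyshev_gf_qint (F : Type) [Field F] [IsAlgClosed F] [CharZero F]
    (q : F) (hq : q ≠ 0) (hq1 : ∀ n : ℕ, n ≠ 0 → q ^ n ≠ 1) :
    (PowerSeries.C (R := Polynomial F) (Polynomial.C q) * PowerSeries.X ^ 2 +
        PowerSeries.C (R := Polynomial F) Polynomial.X * PowerSeries.X +
        PowerSeries.C (R := Polynomial F) (Polynomial.C q⁻¹)) *
      ((PowerSeries.C (R := Polynomial F) (Polynomial.C q⁻¹) * PowerSeries.X ^ 2 +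
        PowerSeries.C (R := Polynomial F) Polynomial.X * PowerSeries.X +
        PowerSeries.C (R := Polynomial F) (Polynomial.C q)) *
      PowerSeries.mk (fun n : ℕ => ((-1 : F) ^ n * qint F q (n : ℤ)) • U F ((n : ℤ) - 1))) =
      PowerSeries.X ^ 3 - PowerSeries.X := by
  have hq' : q⁻¹ ≠ 0 := inv_ne_zero hq
  have hd : q - q⁻¹ ≠ 0 := by
    intro h
    apply hq1 2 (by norm_num)
    have h1 : q = q⁻¹ := sub_eq_zero.mp h
    have h2 : q * q = 1 := by nth_rewrite 2 [h1]; exact mul_inv_cancel₀ hq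
    rw [sq, h2]
  set e : F := (q - q⁻¹)⁻¹ with he
  -- abbreviations
  set A1 := PowerSeries.C (R := Polynomial F) (Polynomial.C q⁻¹) with hA1
  set A2 := PowerSeries.C (R := Polynomial F) (Polynomial.C q) with hA2
  set B1 := PowerSeries.C (R := Polynomial F) (Polynomial.X : Polynomial F) with hB1
  set A3 := PowerSeries.C (R := Polynomial F) (Polynomial.C (-(q * e))) with hA3
  set A4 := PowerSeries.C (R := Polynomial F) (Polynomial.C (-(q⁻¹ * e))) with hA4
  set E1 := PowerSeries.C (R := Polynomial F) (Polynomial.C q * Polynomial.X) with hE1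
  set E2 := PowerSeries.C (R := Polynomial F) (Polynomial.C (q ^ 2)) with hE2
  set D1 := PowerSeries.C (R := Polynomial F) (Polynomial.C q⁻¹ * Polynomial.X) with hD1
  set D2 := PowerSeries.C (R := Polynomial F) (Polynomial.C (q⁻¹ ^ 2)) with hD2
  have hPM1 : (1 + E1 * PowerSeries.X + E2 * PowerSeries.X ^ 2) * Mgf F q = 1 := P_mul_M F q
  have hPM2 : (1 + D1 * PowerSeries.X + D2 * PowerSeries.X ^ 2) * Mgf F q⁻¹ = 1 :=
    P_mul_M F q⁻¹
  have hS : PowerSeries.mk (fun n : ℕ => ((-1 : F) ^ n * qint F q (n : ℤ)) • U F ((n : ℤ) - 1))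
      = A3 * (PowerSeries.X * Mgf F q) - A4 * (PowerSeries.X * Mgf F q⁻¹) := by
    rw [hA3, hA4, he]; exact S_eq F q
  have e1 : Polynomial.C q⁻¹ * (Polynomial.C q * Polynomial.X) = Polynomial.X := by
    rw [← mul_assoc, ← Polynomial.C_mul, inv_mul_cancel₀ hq, Polynomial.C_1, one_mul]
  have e2 : Polynomial.C q⁻¹ * Polynomial.C (q ^ 2) = Polynomial.C q := by
    rw [← Polynomial.C_mul]
    congr 1
    field_simp
  have e3 : Polynomial.C q * (Polynomial.C q⁻¹ * Polynomial.X) = Polynomial.X := by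
    rw [← mul_assoc, ← Polynomial.C_mul, mul_inv_cancel₀ hq, Polynomial.C_1, one_mul]
  have e4 : Polynomial.C q * Polynomial.C (q⁻¹ ^ 2) = Polynomial.C q⁻¹ := by
    rw [← Polynomial.C_mul]
    congr 1
    field_simp
  have hA : A2 * PowerSeries.X ^ 2 + B1 * PowerSeries.X + A1
      = A1 * (1 + E1 * PowerSeries.X + E2 * PowerSeries.X ^ 2) := by
    rw [hA1, hA2, hB1, hE1, hE2, mul_add, mul_add, mul_one, ← mul_assoc, ← map_mul, e1,
      ← mul_assoc, ← map_mul, e2]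
    ring
  have hB : A1 * PowerSeries.X ^ 2 + B1 * PowerSeries.X + A2
      = A2 * (1 + D1 * PowerSeries.X + D2 * PowerSeries.X ^ 2) := by
    rw [hA1, hA2, hB1, hD1, hD2, mul_add, mul_add, mul_one, ← mul_assoc, ← map_mul, e3,
      ← mul_assoc, ← map_mul, e4]
    ring
  have h5 : A1 * A2 = 1 := by
    rw [hA1, hA2, ← map_mul, ← Polynomial.C_mul, inv_mul_cancel₀ hq, Polynomial.C_1, map_one]
  have hmul : (q - q⁻¹) * e = 1 := mul_inv_cancel₀ hd
  have hi : q * q⁻¹ = 1 := mul_inv_cancel₀ hq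
  have r2 : A3 - A4 = -1 := by
    have hs : (-(q * e)) - (-(q⁻¹ * e)) = -1 := by linear_combination -hmul
    rw [hA3, hA4, ← map_sub, ← Polynomial.C_sub, hs, map_neg, map_neg, Polynomial.C_1, map_one]
  have r3 : A3 * D1 = A4 * E1 := by
    have hs : (-(q * e)) * q⁻¹ = (-(q⁻¹ * e)) * q := by ring
    rw [hA3, hA4, hD1, hE1, ← map_mul, ← map_mul, ← mul_assoc, ← mul_assoc,
      ← Polynomial.C_mul, ← Polynomial.C_mul, hs]
  have r4 : A3 * D2 - A4 * E2 = 1 := by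
    have hs : (-(q * e)) * q⁻¹ ^ 2 - (-(q⁻¹ * e)) * q ^ 2 = 1 := by
      linear_combination (e * (q - q⁻¹)) * hi + hmul
    rw [hA3, hA4, hD2, hE2]
    simp only [← map_mul, ← map_sub]
    rw [hs, Polynomial.C_1, map_one]
  rw [hS, hA, hB]
  have step : A1 * (1 + E1 * PowerSeries.X + E2 * PowerSeries.X ^ 2) *
        (A2 * (1 + D1 * PowerSeries.X + D2 * PowerSeries.X ^ 2) *
          (A3 * (PowerSeries.X * Mgf F q) - A4 * (PowerSeries.X * Mgf F q⁻¹)))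
      = (A1 * A2) *
          (A3 * PowerSeries.X * (1 + D1 * PowerSeries.X + D2 * PowerSeries.X ^ 2) *
              ((1 + E1 * PowerSeries.X + E2 * PowerSeries.X ^ 2) * Mgf F q)
            - A4 * PowerSeries.X * (1 + E1 * PowerSeries.X + E2 * PowerSeries.X ^ 2) *
              ((1 + D1 * PowerSeries.X + D2 * PowerSeries.X ^ 2) * Mgf F q⁻¹)) := by
    ring
  rw [step, h5, hPM1, hPM2, one_mul, mul_one, mul_one]
  linear_combination PowerSeries.X * r2 + PowerSeries.X ^ 2 * r3 + PowerSeries.X ^ 3 * r4
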